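/- Let A be a graph (signature {E}) and let A' be the ternary-signature structure on universe A ⊔ {t} defined by A' ⊨ R(a,c,b) iff a ≠ b, c ∈ {a,b}, and (A ⊨ E(a,b) or a = t). Then ucw(A') ≥ pw(G_{A'}) + 1; equivalently, if ucw(A') ≤ k then pw(G_A) ≤ k − 2. -/

import Mathlib

/-- A relational signature: a type of relation symbols with arities. -/
structure Signature where
  symbols : Type
  ar : symbols → ℕ

/-- A coloured σ-structure: a carrier, interpretations of the relation
symbols, and a colouring of the elements by natural numbers. -/
structure CStruc (σ : Signature) where
  carrier : Type
  rel : ∀ R : σ.symbols, (Fin (σ.ar R) → carrier) → Prop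
  col : carrier → ℕ

/-- Isomorphism of coloured structures. -/
structure CIso {σ : Signature} (A B : CStruc σ) where
  toEquiv : A.carrier ≃ B.carrier
  rel_iff : ∀ (R : σ.symbols) (t : Fin (σ.ar R) → A.carrier),
    A.rel R t ↔ B.rel R fun i => toEquiv (t i)
  col_eq : ∀ a, B.col (toEquiv a) = A.col a

/-- Disjoint union of coloured structures. -/
def CStruc.union {σ : Signature} (A B : CStruc σ) : CStruc σ where
  carrier := A.carrier ⊕ B.carrier
  rel R t := (∃ s, (∀ i, t i = Sum.inl (s i)) ∧ A.rel R s) ∨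
             (∃ s, (∀ i, t i = Sum.inr (s i)) ∧ B.rel R s)
  col := Sum.elim A.col B.col

/-- Recolouring of a coloured structure. -/
def CStruc.recolor {σ : Signature} (A : CStruc σ) (f : ℕ → ℕ) : CStruc σ where
  carrier := A.carrier
  rel := A.rel
  col := f ∘ A.col

/-- Introduce into the relation `R` all tuples whose colours match `c`. -/
def CStruc.introduce {σ : Signature} (A : CStruc σ) (R : σ.symbols)
    (c : Fin (σ.ar R) → ℕ) : CStruc σ where
  carrier := A.carrier
  rel S t := A.rel S t ∨ ∃ h : S = R, ∀ i : Fin (σ.ar R),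
    A.col (t (Fin.cast (congrArg σ.ar h).symm i)) = c i
  col := A.col

/-- The class UCW_k[σ]: coloured structures of unary clique-width at most `k`,
generated from empty structures and relation-free singletons of colour 0 by
disjoint union, recolouring (by functions on the colours `< k`), and
introduction of a relation along a tuple of colours, closed under isomorphism. -/
inductive UCW (σ : Signature) (k : ℕ) : CStruc σ → Prop where
  | empty (A : CStruc σ) (h : IsEmpty A.carrier) : UCW σ k A
  | single (hk : 0 < k) (A : CStruc σ) (hsub : ∀ a b : A.carrier, a = b)
      (hne : Nonempty A.carrier)
      (hrel : ∀ (R : σ.symbols) (t : Fin (σ.ar R) → A.carrier), ¬ A.rel R t)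
      (hcol : ∀ a, A.col a = 0) : UCW σ k A
  | union {A B : CStruc σ} : UCW σ k A → UCW σ k B → UCW σ k (A.union B)
  | recolor {A : CStruc σ} (f : ℕ → ℕ) (hf : ∀ i, i < k → f i < k) :
      UCW σ k A → UCW σ k (A.recolor f)
  | introduce {A : CStruc σ} (R : σ.symbols) (c : Fin (σ.ar R) → ℕ)
      (hc : ∀ i, c i < k) : UCW σ k A → UCW σ k (A.introduce R c)
  | iso {A B : CStruc σ} (e : CIso A B) : UCW σ k A → UCW σ k B

/-- Unary clique-width: the least `k` such that the structure is in UCW_k[σ]. -/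
noncomputable def ucw {σ : Signature} (A : CStruc σ) : ℕ := sInf {k | UCW σ k A}

/-- The Gaifman graph of a structure: distinct elements are adjacent iff they
occur together in some tuple of some relation. -/
def CStruc.gaifman {σ : Signature} (A : CStruc σ) : SimpleGraph A.carrier where
  Adj a b := a ≠ b ∧ ∃ (R : σ.symbols) (u : Fin (σ.ar R) → A.carrier),
    A.rel R u ∧ (∃ i, u i = a) ∧ (∃ j, u j = b)
  symm := by
    constructor
    rintro a b ⟨hne, R, u, hu, hi, hj⟩
    exact ⟨hne.symm, R, u, hu, hj, hi⟩
  loopless := by constructor; rintro a ⟨hne, -⟩; exact hne rfl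

/-- A path decomposition of `G` with `n` bags. -/
structure PathDecomp {V : Type} (G : SimpleGraph V) (n : ℕ) where
  bag : Fin n → Set V
  mem_bag : ∀ v, ∃ i, v ∈ bag i
  mem_edge : ∀ u v, G.Adj u v → ∃ i, u ∈ bag i ∧ v ∈ bag i
  interval : ∀ (v : V) (i j m : Fin n), i ≤ m → m ≤ j →
    v ∈ bag i → v ∈ bag j → v ∈ bag m

/-- `G` has path-width at most `w`. -/
def pwLe {V : Type} (G : SimpleGraph V) (w : ℕ) : Prop :=
  ∃ n, ∃ P : PathDecomp G n, ∀ i, (P.bag i).ncard ≤ w + 1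

/-- The path-width of `G`. -/
noncomputable def pw {V : Type} (G : SimpleGraph V) : ℕ := sInf {w | pwLe G w}

/-- The signature of graphs: one binary relation symbol `E`. -/
abbrev sigGraph : Signature := ⟨Unit, fun _ => 2⟩
/-- A signature with a single ternary relation symbol `R`. -/
abbrev sigTernary : Signature := ⟨Unit, fun _ => 3⟩

/-- The structure `A'` of the paper: universe `A ⊔ {t}` (with `t = Sum.inr ()`),
and `R a c b` iff `a ≠ b`, `c ∈ {a, b}`, and (`E a b` holds in `A` or `a = t`). -/
def prime (A : CStruc sigGraph) : CStruc sigTernary where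
  carrier := A.carrier ⊕ Unit
  rel := fun _ u => u 0 ≠ u 2 ∧ (u 1 = u 0 ∨ u 1 = u 2) ∧
    ((∃ a b : A.carrier, u 0 = Sum.inl a ∧ u 2 = Sum.inl b ∧ A.rel () ![a, b]) ∨
      u 0 = Sum.inr ())
  col := fun _ => 0

open Sum

lemma prime_rel_iff (A : CStruc sigGraph) (R : Unit) (u : Fin 3 → (prime A).carrier) :
    (prime A).rel R u ↔ (u 0 ≠ u 2 ∧ (u 1 = u 0 ∨ u 1 = u 2) ∧
      ((∃ a b : A.carrier, u 0 = Sum.inl a ∧ u 2 = Sum.inl b ∧ A.rel () ![a, b]) ∨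
        u 0 = Sum.inr ())) := Iff.rfl

lemma intro_rel (B : CStruc sigTernary) (c : Fin 3 → ℕ) (R : Unit) (w : Fin 3 → B.carrier) :
    (B.introduce () c).rel R w ↔ B.rel R w ∨ ∀ i : Fin 3, B.col (w i) = c i := by
  cases R
  constructor
  · rintro (h | ⟨h', hm⟩)
    · exact Or.inl h
    · exact Or.inr (fun i => by simpa using hm i)
  · rintro (h | hm)
    · exact Or.inl h
    · exact Or.inr ⟨rfl, fun i => by simpa using hm i⟩

lemma collt {σ : Signature} {k : ℕ} {B : CStruc σ} (h : UCW σ k B) : ∀ a, B.col a < k := by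
  induction h with
  | empty A h => exact fun a => (h.false a).elim
  | single hk A hsub hne hrel hcol => exact fun a => (hcol a) ▸ hk
  | union hA hB ihA ihB => rintro (a | b); exacts [ihA a, ihB b]
  | recolor f hf h ih => exact fun a => hf _ (ih a)
  | introduce R c hc h ih => exact ih
  | iso e h ih =>
      intro b
      have := e.col_eq (e.toEquiv.symm b)
      rw [Equiv.apply_symm_apply] at this
      rw [this]; exact ih _

lemma ncard_le_of_injcol {σ : Signature} {k : ℕ} {B : CStruc σ} (hcol : ∀ a, B.col a < k)
    (S : Set B.carrier) (h : Set.InjOn B.col S) : S.ncard ≤ k := by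
  have h2 : Nat.card S ≤ Nat.card (Fin k) :=
    Nat.card_le_card_of_injective (fun z => (⟨B.col z.1, hcol _⟩ : Fin k))
      (fun z1 z2 hz => Subtype.ext (h z1.2 z2.2 (by simpa using congrArg Fin.val hz)))
  simpa [Nat.card_coe_set_eq, Nat.card_eq_fintype_card] using h2

/-- The tuple `u` of `prime A` has a preimage tuple in `B`'s relation. -/
def inB (A : CStruc sigGraph) (B : CStruc sigTernary) (e : B.carrier → (prime A).carrier)
    (u : Fin 3 → (prime A).carrier) : Prop :=
  ∃ w : Fin 3 → B.carrier, (∀ i, e (w i) = u i) ∧ B.rel () w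

/-- `x` is "live": some valid tuple of `prime A` with `e x` in the middle is still missing. -/
def LiveAt (A : CStruc sigGraph) (B : CStruc sigTernary) (e : B.carrier → (prime A).carrier)
    (x : B.carrier) : Prop :=
  ∃ u : Fin 3 → (prime A).carrier, (prime A).rel () u ∧ u 1 = e x ∧ ¬ inB A B e u

/-- `x` is the unique element of its colour. -/
def Iso1 {σ : Signature} (B : CStruc σ) (x : B.carrier) : Prop :=
  ∀ y, B.col y = B.col x → y = x

def Hyp (A : CStruc sigGraph) (B : CStruc sigTernary) (e : B.carrier → (prime A).carrier)
    (t₀ : B.carrier) : Prop :=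
  ∀ x, x ≠ t₀ → LiveAt A B e x → Iso1 B x

def Concl (A : CStruc sigGraph) (k : ℕ) (B : CStruc sigTernary)
    (e : B.carrier → (prime A).carrier) (t₀ : B.carrier) : Prop :=
  ∃ (n : ℕ) (bag : Fin (n+1) → Set B.carrier),
    (∀ v, ∃ i, v ∈ bag i) ∧
    (∀ u v, B.gaifman.Adj u v → ∃ i, u ∈ bag i ∧ v ∈ bag i) ∧
    (∀ (v : B.carrier) (i j m : Fin (n+1)), i ≤ m → m ≤ j →
        v ∈ bag i → v ∈ bag j → v ∈ bag m) ∧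
    (∀ i, (bag i).ncard ≤ k) ∧
    (∀ i, t₀ ∈ bag i) ∧
    (∀ x, LiveAt A B e x → x ∈ bag (Fin.last n))

lemma injOn_helper {σ : Signature} {B : CStruc σ} (t₀ : B.carrier) (S : Set B.carrier)
    (h : ∀ z ∈ S, z ≠ t₀ → Iso1 B z) : Set.InjOn B.col S := by
  intro x hx y hy hxy
  by_cases hxt : x = t₀
  · by_cases hyt : y = t₀
    · rw [hxt, hyt]
    · exact h y hy hyt x hxy
  · exact (h x hx hxt y hxy.symm).symm

lemma snoc_interval {V : Type} (n : ℕ) (bag : Fin (n+1) → Set V) (F : Set V)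
    (hint : ∀ (v : V) (i j m : Fin (n+1)), i ≤ m → m ≤ j → v ∈ bag i → v ∈ bag j → v ∈ bag m)
    (hF : ∀ v ∈ F, (∃ i, v ∈ bag i) → v ∈ bag (Fin.last n)) :
    ∀ (v : V) (i j m : Fin (n+2)), i ≤ m → m ≤ j →
      v ∈ (Fin.snoc bag F : Fin (n+2) → Set V) i → v ∈ (Fin.snoc bag F : Fin (n+2) → Set V) j →
      v ∈ (Fin.snoc bag F : Fin (n+2) → Set V) m := by
  intro v i j m him hmj hi hj
  rcases Fin.eq_castSucc_or_eq_last j with ⟨j', rfl⟩ | rfl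
  · have hm : m < Fin.last (n+1) := lt_of_le_of_lt hmj (Fin.castSucc_lt_last j')
    rcases Fin.eq_castSucc_or_eq_last m with ⟨m', rfl⟩ | rfl
    swap
    · exact absurd rfl hm.ne
    have hilt : i < Fin.last (n+1) := lt_of_le_of_lt him hm
    rcases Fin.eq_castSucc_or_eq_last i with ⟨i', rfl⟩ | rfl
    swap
    · exact absurd rfl hilt.ne
    rw [Fin.snoc_castSucc] at hi hj ⊢
    exact hint v i' j' m' (by exact_mod_cast him) (by exact_mod_cast hmj) hi hj
  · rcases Fin.eq_castSucc_or_eq_last m with ⟨m', rfl⟩ | rfl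
    · have hilt : i < Fin.last (n+1) := lt_of_le_of_lt him (Fin.castSucc_lt_last m')
      rcases Fin.eq_castSucc_or_eq_last i with ⟨i', rfl⟩ | rfl
      swap
      · exact absurd rfl hilt.ne
      rw [Fin.snoc_castSucc] at hi ⊢
      rw [Fin.snoc_last] at hj
      have hlast : v ∈ bag (Fin.last n) := hF v hj ⟨i', hi⟩
      exact hint v i' (Fin.last n) m' (by exact_mod_cast him) (Fin.le_last m') hi hlast
    · exact hj

lemma inB_iso {A : CStruc sigGraph} {B B' : CStruc sigTernary} (φ : CIso B B')
    (e : B'.carrier → (prime A).carrier) (u : Fin 3 → (prime A).carrier) :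
    inB A B (fun b => e (φ.toEquiv b)) u ↔ inB A B' e u := by
  constructor
  · rintro ⟨w, hw, hr⟩
    exact ⟨fun i => φ.toEquiv (w i), hw, (φ.rel_iff () w).mp hr⟩
  · rintro ⟨w, hw, hr⟩
    refine ⟨fun i => φ.toEquiv.symm (w i), by simp [hw], ?_⟩
    have := (φ.rel_iff () (fun i => φ.toEquiv.symm (w i))).symm
    simp only [Equiv.apply_symm_apply] at this
    exact this.mp hr

lemma live_iso {A : CStruc sigGraph} {B B' : CStruc sigTernary} (φ : CIso B B')
    (e : B'.carrier → (prime A).carrier) (x : B.carrier) :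
    LiveAt A B (fun b => e (φ.toEquiv b)) x ↔ LiveAt A B' e (φ.toEquiv x) := by
  unfold LiveAt
  constructor
  · rintro ⟨u, h1, h2, h3⟩
    exact ⟨u, h1, h2, fun hc => h3 ((inB_iso φ e u).mpr hc)⟩
  · rintro ⟨u, h1, h2, h3⟩
    exact ⟨u, h1, h2, fun hc => h3 ((inB_iso φ e u).mp hc)⟩

lemma adj_iso {B B' : CStruc sigTernary} (φ : CIso B B') (u v : B'.carrier)
    (h : B'.gaifman.Adj u v) :
    B.gaifman.Adj (φ.toEquiv.symm u) (φ.toEquiv.symm v) := by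
  obtain ⟨hne, R, w, hr, ⟨i, hi⟩, ⟨j, hj⟩⟩ := h
  refine ⟨fun hc => hne (by simpa using congrArg φ.toEquiv hc), R,
    fun i => φ.toEquiv.symm (w i), ?_, ⟨i, by simp only []; rw [hi]⟩, ⟨j, by simp only []; rw [hj]⟩⟩
  have := (φ.rel_iff R (fun i => φ.toEquiv.symm (w i))).symm
  simp only [Equiv.apply_symm_apply] at this
  exact this.mp hr

lemma Concl.transport {A : CStruc sigGraph} {k : ℕ} {B B' : CStruc sigTernary}
    (φ : CIso B B') (e : B'.carrier → (prime A).carrier) (t₀ : B.carrier)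
    (h : Concl A k B (fun b => e (φ.toEquiv b)) t₀) : Concl A k B' e (φ.toEquiv t₀) := by
  obtain ⟨n, bag, hmem, hedge, hint, hcard, ht, hlast⟩ := h
  refine ⟨n, fun i => φ.toEquiv '' bag i, ?_, ?_, ?_, ?_, ?_, ?_⟩
  · intro v
    obtain ⟨i, hi⟩ := hmem (φ.toEquiv.symm v)
    exact ⟨i, ⟨_, hi, by simp⟩⟩
  · intro u v huv
    obtain ⟨i, h1, h2⟩ := hedge _ _ (adj_iso φ u v huv)
    exact ⟨i, ⟨_, h1, by simp⟩, ⟨_, h2, by simp⟩⟩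
  · intro v i j m him hmj hi hj
    rw [Set.mem_image_equiv] at hi hj ⊢
    exact hint _ i j m him hmj hi hj
  · intro i
    rw [Set.ncard_image_of_injective _ φ.toEquiv.injective]
    exact hcard i
  · exact fun i => ⟨t₀, ht i, rfl⟩
  · intro x hx
    have : LiveAt A B (fun b => e (φ.toEquiv b)) (φ.toEquiv.symm x) := by
      rw [live_iso φ e]
      simpa using hx
    exact ⟨_, hlast _ this, by simp⟩

def MainStmt (A : CStruc sigGraph) (k : ℕ) (B : CStruc sigTernary) : Prop :=
  ∀ e : B.carrier → (prime A).carrier, Function.Injective e →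
    (∀ (R : Unit) (u : Fin 3 → B.carrier), B.rel R u → (prime A).rel R fun i => e (u i)) →
    ∀ t₀ : B.carrier, e t₀ = Sum.inr () → Hyp A B e t₀ → Concl A k B e t₀

def unionComm (X Y : CStruc sigTernary) : CIso (Y.union X) (X.union Y) where
  toEquiv := Equiv.sumComm Y.carrier X.carrier
  rel_iff := by
    intro R t
    constructor
    · rintro (⟨s, hs, hr⟩ | ⟨s, hs, hr⟩)
      · refine Or.inr ⟨s, fun i => ?_, hr⟩
        show Equiv.sumComm _ _ (t i) = Sum.inr (s i)
        rw [hs i]; rfl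
      · refine Or.inl ⟨s, fun i => ?_, hr⟩
        show Equiv.sumComm _ _ (t i) = Sum.inl (s i)
        rw [hs i]; rfl
    · rintro (⟨s, hs, hr⟩ | ⟨s, hs, hr⟩)
      · refine Or.inr ⟨s, fun i => ?_, hr⟩
        have h2 : Sum.swap (t i) = Sum.inl (s i) := hs i
        have h3 := congrArg Sum.swap h2
        erw [Sum.swap_swap] at h3
        simpa using h3
      · refine Or.inl ⟨s, fun i => ?_, hr⟩
        have h2 : Sum.swap (t i) = Sum.inr (s i) := hs i
        have h3 := congrArg Sum.swap h2
        erw [Sum.swap_swap] at h3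
        simpa using h3
  col_eq := by rintro (y | x) <;> rfl

lemma union_step {A : CStruc sigGraph} {k : ℕ} {X Y : CStruc sigTernary}
    (hX : UCW sigTernary k X) (hY : UCW sigTernary k Y) (IH : MainStmt A k X)
    (e : (X.union Y).carrier → (prime A).carrier) (he : Function.Injective e)
    (hrel : ∀ (R : Unit) (u : Fin 3 → (X.union Y).carrier),
      (X.union Y).rel R u → (prime A).rel R fun i => e (u i))
    (a : X.carrier) (ha : e (Sum.inl a) = Sum.inr ())
    (hyp : Hyp A (X.union Y) e (Sum.inl a)) : Concl A k (X.union Y) e (Sum.inl a) := by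
  classical
  have colU : ∀ z, (X.union Y).col z < k := collt (UCW.union hX hY)
  have h0inj : Function.Injective (fun x : X.carrier => e (Sum.inl x)) :=
    fun x y h => Sum.inl_injective (he h)
  have h0rel : ∀ (R : Unit) (u : Fin 3 → X.carrier), X.rel R u →
      (prime A).rel R fun i => e (Sum.inl (u i)) :=
    fun R u hu => hrel R (fun i => Sum.inl (u i)) (Or.inl ⟨u, fun _ => rfl, hu⟩)
  have inBup : ∀ u, inB A X (fun x => e (Sum.inl x)) u → inB A (X.union Y) e u := by
    rintro u ⟨w, hw, hr⟩
    exact ⟨fun i => Sum.inl (w i), hw, Or.inl ⟨w, fun _ => rfl, hr⟩⟩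
  have inBdown : ∀ (x : X.carrier) (u : Fin 3 → (prime A).carrier), u 1 = e (Sum.inl x) →
      inB A (X.union Y) e u → inB A X (fun x => e (Sum.inl x)) u := by
    rintro x u hu1 ⟨w, hw, (⟨s, hs, hrX⟩ | ⟨s, hs, hrY⟩)⟩
    · refine ⟨s, fun i => ?_, hrX⟩
      show e (Sum.inl (s i)) = u i
      rw [← hs i]; exact hw i
    · exfalso
      have h1 : w 1 = Sum.inl x := he ((hw 1).trans hu1)
      rw [hs 1] at h1
      cases h1
  have liveXU : ∀ x : X.carrier,
      LiveAt A X (fun x => e (Sum.inl x)) x ↔ LiveAt A (X.union Y) e (Sum.inl x) := by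
    intro x
    constructor
    · rintro ⟨u, h1, h2, h3⟩
      exact ⟨u, h1, h2, fun hc => h3 (inBdown x u h2 hc)⟩
    · rintro ⟨u, h1, h2, h3⟩
      exact ⟨u, h1, h2, fun hc => h3 (inBup u hc)⟩
  have hypX : Hyp A X (fun x => e (Sum.inl x)) a := by
    intro x hx hl
    have hIso : Iso1 (X.union Y) (Sum.inl x) :=
      hyp (Sum.inl x) (fun h => hx (Sum.inl_injective h)) ((liveXU x).mp hl)
    intro y hy
    exact Sum.inl_injective (hIso (Sum.inl y) hy)
  obtain ⟨n, bag, hmem, hedge, hint, hcard, ht, hlast⟩ :=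
    IH (fun x => e (Sum.inl x)) h0inj h0rel a ha hypX
  set L : Set (X.union Y).carrier :=
    insert (Sum.inl a) {z | LiveAt A (X.union Y) e z} with hL
  have liveInr : ∀ y : Y.carrier, LiveAt A (X.union Y) e (Sum.inr y) := by
    intro y
    refine ⟨![Sum.inr (), e (Sum.inr y), e (Sum.inr y)], ?_, by simp, ?_⟩
    · rw [prime_rel_iff]
      refine ⟨?_, by simp, Or.inr rfl⟩
      change Sum.inr () ≠ e (Sum.inr y)
      intro h
      have := he (ha.trans h)
      cases this
    · rintro ⟨w, hw, (⟨s, hs, hrX⟩ | ⟨s, hs, hrY⟩)⟩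
      · have h1 : w 1 = Sum.inr y := he (by simpa using hw 1)
        rw [hs 1] at h1
        cases h1
      · have h0 : w 0 = Sum.inl a := he (by simpa [ha] using hw 0)
        rw [hs 0] at h0
        cases h0
  have hLlive : ∀ z ∈ L, z ≠ Sum.inl a → Iso1 (X.union Y) z := by
    intro z hz hne
    rcases Set.mem_insert_iff.mp hz with h | h
    · exact absurd h hne
    · exact hyp z hne h
  refine ⟨n+1, Fin.snoc (fun i => Sum.inl '' bag i) L, ?_, ?_, ?_, ?_, ?_, ?_⟩
  · rintro (x | y)
    · obtain ⟨i, hi⟩ := hmem x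
      exact ⟨i.castSucc, by rw [Fin.snoc_castSucc]; exact ⟨x, hi, rfl⟩⟩
    · refine ⟨Fin.last (n+1), ?_⟩
      rw [Fin.snoc_last]
      exact Set.mem_insert_iff.mpr (Or.inr (liveInr y))
  · rintro u v ⟨hne, R, w, hr, ⟨i, hi⟩, ⟨j, hj⟩⟩
    rcases hr with ⟨s, hs, hrX⟩ | ⟨s, hs, hrY⟩
    · have hAdj : X.gaifman.Adj (s i) (s j) := by
        refine ⟨fun h => hne ?_, R, s, hrX, ⟨i, rfl⟩, ⟨j, rfl⟩⟩
        rw [← hi, ← hj, hs i, hs j, h]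
      obtain ⟨i₀, h1, h2⟩ := hedge _ _ hAdj
      refine ⟨i₀.castSucc, ?_, ?_⟩ <;> rw [Fin.snoc_castSucc]
      · exact ⟨s i, h1, by rw [← hs i, hi]⟩
      · exact ⟨s j, h2, by rw [← hs j, hj]⟩
    · refine ⟨Fin.last (n+1), ?_, ?_⟩ <;> rw [Fin.snoc_last]
      · rw [← hi, hs i]
        exact Set.mem_insert_iff.mpr (Or.inr (liveInr (s i)))
      · rw [← hj, hs j]
        exact Set.mem_insert_iff.mpr (Or.inr (liveInr (s j)))
  · refine snoc_interval (n := n) (fun i => Sum.inl '' bag i) L ?_ ?_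
    · intro v i j m him hmj hvi hvj
      obtain ⟨x, hx, rfl⟩ := hvi
      obtain ⟨x', hx', hxe⟩ := hvj
      have hxx : x' = x := Sum.inl_injective hxe
      exact ⟨x, hint x i j m him hmj hx (hxx ▸ hx'), rfl⟩
    · intro v hv hex
      rcases Set.mem_insert_iff.mp hv with rfl | h
      · exact ⟨a, ht _, rfl⟩
      · obtain ⟨i, hvi⟩ := hex
        obtain ⟨x, hx, rfl⟩ := hvi
        exact ⟨x, hlast x ((liveXU x).mpr h), rfl⟩
  · intro i
    rcases Fin.eq_castSucc_or_eq_last i with ⟨i', rfl⟩ | rfl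
    · rw [Fin.snoc_castSucc]
      exact (Set.ncard_image_of_injective (bag i') Sum.inl_injective).trans_le (hcard i')
    · rw [Fin.snoc_last]
      exact ncard_le_of_injcol colU L (injOn_helper (Sum.inl a) L hLlive)
  · intro i
    rcases Fin.eq_castSucc_or_eq_last i with ⟨i', rfl⟩ | rfl
    · rw [Fin.snoc_castSucc]; exact ⟨a, ht i', rfl⟩
    · rw [Fin.snoc_last]; exact Set.mem_insert _ _
  · intro x hx
    rw [Fin.snoc_last]
    exact Set.mem_insert_iff.mpr (Or.inr hx)

lemma introduce_step {A : CStruc sigGraph}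
    (hsymm : ∀ a b : A.carrier, A.rel () ![a, b] → A.rel () ![b, a])
    {k : ℕ} {X : CStruc sigTernary} (hX : UCW sigTernary k X) (c : Fin 3 → ℕ)
    (hc : ∀ i, c i < k) (IH : MainStmt A k X)
    (e : (X.introduce () c).carrier → (prime A).carrier) (he : Function.Injective e)
    (hrel : ∀ (R : Unit) (u : Fin 3 → (X.introduce () c).carrier),
      (X.introduce () c).rel R u → (prime A).rel R fun i => e (u i))
    (t₀ : (X.introduce () c).carrier) (ht : e t₀ = Sum.inr ())
    (hyp : Hyp A (X.introduce () c) e t₀) : Concl A k (X.introduce () c) e t₀ := by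
  classical
  have hcolB' : ∀ z, (X.introduce () c).col z < k := collt (UCW.introduce () c hc hX)
  have hrelB : ∀ (R : Unit) (u : Fin 3 → X.carrier), X.rel R u →
      (prime A).rel R fun i => e (u i) := by
    intro R u h
    cases R
    exact hrel () u ((intro_rel X c () u).mpr (Or.inl h))
  have hmatch : ∀ w : Fin 3 → X.carrier, (∀ i, X.col (w i) = c i) →
      (prime A).rel () fun i => e (w i) :=
    fun w hw => hrel () w ((intro_rel X c () w).mpr (Or.inr hw))
  have key : ∀ v : Fin 3 → X.carrier, (∀ i, X.col (v i) = c i) →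
      (v 1 = v 0 ∨ v 1 = v 2) ∧ v 0 ≠ v 2 := by
    intro v hv
    have hp := hmatch v hv
    rw [prime_rel_iff] at hp
    exact ⟨hp.2.1.imp (fun h => he h) (fun h => he h), fun hh => hp.1 (congrArg e hh)⟩
  have colv : ∀ (p q r : X.carrier), X.col p = c 0 → X.col q = c 1 → X.col r = c 2 →
      ∀ i, X.col (![p, q, r] i) = c i := by
    intro p q r h0 h1 h2 i
    fin_cases i <;> simpa
  set M : Set X.carrier :=
    {m | ∃ w : Fin 3 → X.carrier, ¬ X.rel () w ∧ (∀ i, X.col (w i) = c i) ∧ w 1 = m} with hM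
  have hMlive : ∀ m ∈ M, LiveAt A X e m := by
    rintro m ⟨w, hnw, hw, rfl⟩
    refine ⟨fun i => e (w i), hmatch w hw, rfl, ?_⟩
    rintro ⟨w₂, hw₂, hr₂⟩
    have : w₂ = w := funext fun i => he (hw₂ i)
    rw [this] at hr₂
    exact hnw hr₂
  have hlive' : ∀ z, LiveAt A (X.introduce () c) e z → LiveAt A X e z := by
    rintro z ⟨u, h1, h2, h3⟩
    refine ⟨u, h1, h2, fun hc2 => h3 ?_⟩
    obtain ⟨w, hw, hr⟩ := hc2
    exact ⟨w, hw, (intro_rel X c () w).mpr (Or.inl hr)⟩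
  have hypB : Hyp A X e t₀ := by
    rintro x hx ⟨u, hu, hu1, hnin⟩
    by_cases hB' : inB A (X.introduce () c) e u
    · obtain ⟨w, hw, hrelw⟩ := hB'
      have hw1 : w 1 = x := he ((hw 1).trans hu1)
      rcases (intro_rel X c () w).mp hrelw with ho | hm
      · exact absurd ⟨w, hw, ho⟩ hnin
      · have hcx : X.col x = c 1 := hw1 ▸ hm 1
        intro y hy
        by_contra hne
        have hcy : X.col y = c 1 := hy.trans hcx
        have hy0 : y = w 0 ∨ y = w 2 :=
          (key ![w 0, y, w 2] (colv _ _ _ (hm 0) hcy (hm 2))).1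
        rcases hy0 with h0 | h2
        · have hc0 : c 0 = c 1 := by rw [← hm 0, ← h0, hcy]
          have hy2 : y = x ∨ y = w 2 :=
            (key ![x, y, w 2] (colv _ _ _ (hcx.trans hc0.symm) hcy (hm 2))).1
          rcases hy2 with h | h2
          · exact hne h
          · have hc2 : c 2 = c 1 := by rw [← hm 2, ← h2, hcy]
            exact (key ![y, x, y]
              (colv _ _ _ (hcy.trans hc0.symm) hcx (hcy.trans hc2.symm))).2 rfl
        · have hc2 : c 2 = c 1 := by rw [← hm 2, ← h2, hcy]
          have hy2 : y = w 0 ∨ y = x :=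
            (key ![w 0, y, x] (colv _ _ _ (hm 0) hcy (hcx.trans hc2.symm))).1
          rcases hy2 with h0 | h
          · have hc0 : c 0 = c 1 := by rw [← hm 0, ← h0, hcy]
            exact (key ![y, x, y]
              (colv _ _ _ (hcy.trans hc0.symm) hcx (hcy.trans hc2.symm))).2 rfl
          · exact hne h
    · exact hyp x hx ⟨u, hu, hu1, hB'⟩
  obtain ⟨n, bag, hmem, hedge, hint, hcard, htall, hlast⟩ := IH e he hrelB t₀ ht hypB
  set F : Set X.carrier :=
    insert t₀ ({z | LiveAt A (X.introduce () c) e z} ∪ M) with hF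
  have hMF : ∀ z ∈ M, z ∈ F := fun z hz =>
    Set.mem_insert_iff.mpr (Or.inr (Set.mem_union_right _ hz))
  have hLF : ∀ z, LiveAt A (X.introduce () c) e z → z ∈ F := fun z hz =>
    Set.mem_insert_iff.mpr (Or.inr (Set.mem_union_left _ hz))
  have hFlast : ∀ v ∈ F, v ∈ bag (Fin.last n) := by
    intro v hv
    rcases Set.mem_insert_iff.mp hv with rfl | hv
    · exact htall _
    · rcases hv with hv | hv
      · exact hlast v (hlive' v hv)
      · exact hlast v (hMlive v hv)
  have hFiso : ∀ z ∈ F, z ≠ t₀ → Iso1 (X.introduce () c) z := by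
    intro z hz hne
    rcases Set.mem_insert_iff.mp hz with rfl | hz
    · exact absurd rfl hne
    · rcases hz with hz | hz
      · exact hyp z hne hz
      · exact hypB z hne (hMlive z hz)
  have cont : ∀ m o : X.carrier, m ∈ M → o ≠ m →
      (prime A).rel () ![e m, e o, e o] →
      (∃ i₀, m ∈ bag i₀ ∧ o ∈ bag i₀) ∨ o ∈ F := by
    intro m o hMm hne hv
    by_cases hin : inB A (X.introduce () c) e ![e m, e o, e o]
    · obtain ⟨w₂, hw₂, hr₂⟩ := hin
      have h0 : w₂ 0 = m := he (by simpa using hw₂ 0)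
      have h1 : w₂ 1 = o := he (by simpa using hw₂ 1)
      by_cases hb2 : X.rel () w₂
      · exact Or.inl (hedge m o ⟨fun hh => hne hh.symm, (), w₂, hb2, ⟨0, h0⟩, ⟨1, h1⟩⟩)
      · rcases (intro_rel X c () w₂).mp hr₂ with h | hmm2
        · exact absurd h hb2
        · exact Or.inr (hMF o ⟨w₂, hb2, hmm2, h1⟩)
    · exact Or.inr (hLF o ⟨![e m, e o, e o], hv, by simp, hin⟩)
  refine ⟨n+1, Fin.snoc (α := fun _ => Set X.carrier) bag F, ?_, ?_, ?_, ?_, ?_, ?_⟩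
  · intro v
    obtain ⟨i, hi⟩ := hmem v
    exact ⟨i.castSucc, by rw [Fin.snoc_castSucc]; exact hi⟩
  · rintro u v ⟨hne, R, w, hr, ⟨i, hi⟩, ⟨j, hj⟩⟩
    cases R
    by_cases hbw : X.rel () w
    · obtain ⟨i₀, h1, h2⟩ := hedge u v ⟨hne, (), w, hbw, ⟨i, hi⟩, ⟨j, hj⟩⟩
      refine ⟨i₀.castSucc, ?_, ?_⟩ <;> rw [Fin.snoc_castSucc]
      exacts [h1, h2]
    · have hm : ∀ i, X.col (w i) = c i := ((intro_rel X c () w).mp hr).resolve_left hbw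
      have hval := hmatch w hm
      rw [prime_rel_iff] at hval
      have h02 : w 0 ≠ w 2 := fun hh => hval.1 (congrArg e hh)
      have hmid : w 1 = w 0 ∨ w 1 = w 2 := hval.2.1.imp (fun h => he h) (fun h => he h)
      have hM1 : w 1 ∈ M := ⟨w, hbw, hm, rfl⟩
      have hcomp : ∀ i : Fin 3, w i = w 0 ∨ w i = w 2 := by
        intro i
        fin_cases i
        · exact Or.inl rfl
        · exact hmid
        · exact Or.inr rfl
      have hu02 : u = w 0 ∨ u = w 2 := hi ▸ hcomp i
      have hv02 : v = w 0 ∨ v = w 2 := hj ▸ hcomp j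
      have finish : ((∃ i₀, w 0 ∈ bag i₀ ∧ w 2 ∈ bag i₀) ∨ (w 0 ∈ F ∧ w 2 ∈ F)) →
          ∃ i, u ∈ (Fin.snoc bag F : Fin (n+2) → Set X.carrier) i ∧
            v ∈ (Fin.snoc bag F : Fin (n+2) → Set X.carrier) i := by
        rintro (⟨i₀, hb0, hb2⟩ | ⟨hF0, hF2⟩)
        · refine ⟨i₀.castSucc, ?_, ?_⟩ <;> rw [Fin.snoc_castSucc]
          · rcases hu02 with rfl | rfl
            exacts [hb0, hb2]
          · rcases hv02 with rfl | rfl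
            exacts [hb0, hb2]
        · refine ⟨Fin.last (n+1), ?_, ?_⟩ <;> rw [Fin.snoc_last]
          · rcases hu02 with rfl | rfl
            exacts [hF0, hF2]
          · rcases hv02 with rfl | rfl
            exacts [hF0, hF2]
      rcases hmid with h10 | h12
      · -- middle is w 0
        have hMm : w 0 ∈ M := h10 ▸ hM1
        have hv' : (prime A).rel () ![e (w 0), e (w 2), e (w 2)] := by
          rw [prime_rel_iff]
          refine ⟨?_, Or.inr rfl, ?_⟩
          · simpa using hval.1
          · simpa using hval.2.2
        rcases cont (w 0) (w 2) hMm (fun hh => h02 hh.symm) hv' with old | hoF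
        · exact finish (Or.inl old)
        · exact finish (Or.inr ⟨hMF _ hMm, hoF⟩)
      · -- middle is w 2
        have hMm : w 2 ∈ M := h12 ▸ hM1
        rcases hval.2.2 with ⟨a, b, ha, hb, hE⟩ | hT
        · have hv' : (prime A).rel () ![e (w 2), e (w 0), e (w 0)] := by
            rw [prime_rel_iff]
            refine ⟨?_, Or.inr rfl, Or.inl ⟨b, a, ?_, ?_, hsymm a b hE⟩⟩
            · simpa using fun hh => hval.1 hh.symm
            · simpa using hb
            · simpa using ha
          rcases cont (w 2) (w 0) hMm h02 hv' with old | hoF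
          · obtain ⟨i₀, hb2, hb0⟩ := old
            exact finish (Or.inl ⟨i₀, hb0, hb2⟩)
          · exact finish (Or.inr ⟨hoF, hMF _ hMm⟩)
        · have ht0 : w 0 = t₀ := he (by simpa [ht] using hT)
          exact finish (Or.inr ⟨ht0 ▸ Set.mem_insert t₀ _, hMF _ hMm⟩)
  · exact snoc_interval n bag F hint (fun v hv _ => hFlast v hv)
  · intro i
    rcases Fin.eq_castSucc_or_eq_last i with ⟨i', rfl⟩ | rfl
    · rw [Fin.snoc_castSucc]; exact hcard i'
    · rw [Fin.snoc_last]
      exact ncard_le_of_injcol hcolB' F (injOn_helper t₀ F hFiso)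
  · intro i
    rcases Fin.eq_castSucc_or_eq_last i with ⟨i', rfl⟩ | rfl
    · rw [Fin.snoc_castSucc]; exact htall i'
    · rw [Fin.snoc_last]; exact Set.mem_insert _ _
  · intro x hx
    rw [Fin.snoc_last]
    exact hLF x hx

lemma main_lemma {A : CStruc sigGraph}
    (hsymm : ∀ a b : A.carrier, A.rel () ![a, b] → A.rel () ![b, a])
    {k : ℕ} {B : CStruc sigTernary} (hB : UCW sigTernary k B) : MainStmt A k B := by
  induction hB with
  | empty C h =>
    intro e he hrel t₀ ht hyp
    exact (h.false t₀).elim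
  | single hk C hsub hne hrel0 hcol =>
    intro e he hrel t₀ ht hyp
    refine ⟨0, fun _ => {t₀}, ?_, ?_, ?_, ?_, ?_, ?_⟩
    · exact fun v => ⟨0, hsub v t₀⟩
    · rintro u v ⟨hne', R, w, hr, -, -⟩
      exact absurd hr (hrel0 R w)
    · intro v i j m _ _ h _
      exact h
    · intro i
      rw [Set.ncard_singleton]
      exact hk
    · exact fun i => rfl
    · exact fun x _ => hsub x t₀
  | @union X Y hXu hYu ihX ihY =>
    intro e he hrel t₀ ht hyp
    rcases t₀ with a | b
    · exact union_step hXu hYu ihX e he hrel a ht hyp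
    · set φ := unionComm X Y with hφ
      have hb : φ.toEquiv (Sum.inl b) = Sum.inr b := rfl
      have h1 : Concl A k (Y.union X) (fun z => e (φ.toEquiv z)) (Sum.inl b) := by
        refine union_step hYu hXu ihY (fun z => e (φ.toEquiv z))
          (fun x y h => φ.toEquiv.injective (he h)) ?_ b ?_ ?_
        · intro R u hu
          exact hrel R (fun i => φ.toEquiv (u i)) ((φ.rel_iff R u).mp hu)
        · show e (φ.toEquiv (Sum.inl b)) = Sum.inr ()
          rw [hb]
          exact ht
        · intro x hx hl
          have hl2 : LiveAt A (X.union Y) e (φ.toEquiv x) := (live_iso φ e x).mp hl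
          have hne2 : φ.toEquiv x ≠ Sum.inr b := by
            intro hh
            rw [← hb] at hh
            exact hx (φ.toEquiv.injective hh)
          have hIso := hyp _ hne2 hl2
          intro y hy
          have h3 : (X.union Y).col (φ.toEquiv y) = (X.union Y).col (φ.toEquiv x) := by
            rw [φ.col_eq, φ.col_eq]
            exact hy
          exact φ.toEquiv.injective (hIso _ h3)
      have h2 := Concl.transport φ e (Sum.inl b) h1
      rw [hb] at h2
      exact h2
  | recolor f hf hXu ih =>
    intro e he hrel t₀ ht hyp
    have hyp' := fun x hx hl y hy => hyp x hx hl y (congrArg f hy)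
    exact ih e he hrel t₀ ht hyp'
  | introduce R c hc hXu ih =>
    cases R
    intro e he hrel t₀ ht hyp
    exact introduce_step hsymm hXu c hc ih e he hrel t₀ ht hyp
  | iso φ hXu ih =>
    intro e he hrel t₀ ht hyp
    have h1 : Concl A k _ (fun z => e (φ.toEquiv z)) (φ.toEquiv.symm t₀) := by
      refine ih (fun z => e (φ.toEquiv z)) (fun x y h => φ.toEquiv.injective (he h)) ?_ _ ?_ ?_
      · intro R u hu
        exact hrel R (fun i => φ.toEquiv (u i)) ((φ.rel_iff R u).mp hu)
      · show e (φ.toEquiv (φ.toEquiv.symm t₀)) = Sum.inr ()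
        rw [Equiv.apply_symm_apply]
        exact ht
      · intro x hx hl
        have hl2 := (live_iso φ e x).mp hl
        have hne2 : φ.toEquiv x ≠ t₀ := by
          intro hh
          apply hx
          rw [← hh, Equiv.symm_apply_apply]
        have hIso := hyp _ hne2 hl2
        intro y hy
        have h3 := φ.col_eq y
        rw [hy, ← φ.col_eq x] at h3
        exact φ.toEquiv.injective (hIso _ h3)
    have h2 := Concl.transport φ e _ h1
    rw [Equiv.apply_symm_apply] at h2
    exact h2

def Dstr (m : ℕ) : CStruc sigTernary where
  carrier := Fin m
  rel := fun _ _ => False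
  col := fun i => i.1 + 1

lemma D_ucw (K : ℕ) : ∀ m, m + 1 < K → UCW sigTernary K (Dstr m) := by
  intro m
  induction m with
  | zero =>
    intro _
    exact UCW.empty _ (by constructor; intro a; exact absurd a.2 (by omega))
  | succ m ih =>
    intro hm
    have prev := ih (by omega)
    have hsingle : UCW sigTernary K
        (⟨Fin 1, fun _ _ => False, fun _ => 0⟩ : CStruc sigTernary) :=
      UCW.single (by omega) _ (fun a b => Subsingleton.elim a b) ⟨0⟩ (fun _ _ h => h)
        (fun _ => rfl)
    have hun := UCW.union prev hsingle
    have hg : ∀ i, i < K → (fun j => if j = 0 then m + 1 else j) i < K := by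
      intro i hi
      dsimp only
      split
      · omega
      · exact hi
    have hrec := UCW.recolor _ hg hun
    refine UCW.iso ⟨finSumFinEquiv, ?_, ?_⟩ hrec
    · intro R t
      constructor
      · rintro (⟨s, _, h⟩ | ⟨s, _, h⟩) <;> exact h.elim
      · intro h
        exact h.elim
    · rintro (i | j)
      · show (finSumFinEquiv (Sum.inl i) : Fin (m+1)).1 + 1 =
          (if (i.1 + 1 : ℕ) = 0 then m + 1 else i.1 + 1)
        simp [finSumFinEquiv]
        rfl
      · show (finSumFinEquiv (Sum.inr j) : Fin (m+1)).1 + 1 =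
          (if (0 : ℕ) = 0 then m + 1 else 0)
        have : j = 0 := Subsingleton.elim j 0
        subst this
        simp [finSumFinEquiv]

lemma ucw_exists (C : CStruc sigTernary) [Fintype C.carrier] (hcol : ∀ a, C.col a = 0) :
    ∃ K, UCW sigTernary K C := by
  classical
  obtain ⟨n, ev⟩ : ∃ n, Nonempty (C.carrier ≃ Fin n) :=
    ⟨Fintype.card C.carrier, ⟨Fintype.equivFin C.carrier⟩⟩
  obtain ⟨ev⟩ := ev
  refine ⟨n + 2, ?_⟩
  have hC0 : UCW sigTernary (n+2)
      (⟨C.carrier, fun _ _ => False, fun v => (ev v).1 + 1⟩ : CStruc sigTernary) := by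
    have φ : CIso (Dstr n)
        (⟨C.carrier, fun _ _ => False, fun v => (ev v).1 + 1⟩ : CStruc sigTernary) := by
      refine ⟨ev.symm, fun R t => ⟨fun h => h.elim, fun h => h.elim⟩, fun i => ?_⟩
      show (ev (ev.symm i)).1 + 1 = i.1 + 1
      erw [Equiv.apply_symm_apply]
    exact UCW.iso φ (D_ucw (n+2) n (by omega))
  have hadd : ∀ T : Finset (Fin 3 → C.carrier), UCW sigTernary (n+2)
      (⟨C.carrier, fun _ w => w ∈ T, fun v => (ev v).1 + 1⟩ : CStruc sigTernary) := by
    intro T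
    induction T using Finset.induction_on with
    | empty =>
      have φ : CIso
          (⟨C.carrier, fun _ _ => False, fun v => (ev v).1 + 1⟩ : CStruc sigTernary)
          (⟨C.carrier, fun _ w => w ∈ (∅ : Finset (Fin 3 → C.carrier)),
            fun v => (ev v).1 + 1⟩ : CStruc sigTernary) := by
        refine ⟨Equiv.refl C.carrier, fun R t => ?_, fun a => rfl⟩
        constructor
        · intro h
          exact h.elim
        · intro h
          exact absurd h (by simp)
      exact UCW.iso φ hC0
    | @insert u T hu ihT =>
      have hintro := UCW.introduce
        (A := (⟨C.carrier, fun _ w => w ∈ T, fun v => (ev v).1 + 1⟩ : CStruc sigTernary))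
        () (fun i => (ev (u i)).1 + 1)
        (fun i => by
          show (ev (u i)).1 + 1 < n + 2
          have := (ev (u i)).2
          omega) ihT
      have φ : CIso
          ((⟨C.carrier, fun _ w => w ∈ T, fun v => (ev v).1 + 1⟩ :
            CStruc sigTernary).introduce () (fun i => (ev (u i)).1 + 1))
          (⟨C.carrier, fun _ w => w ∈ insert u T, fun v => (ev v).1 + 1⟩ :
            CStruc sigTernary) := by
        refine ⟨Equiv.refl C.carrier, fun R t => ?_, fun a => rfl⟩
        cases R
        refine (intro_rel (⟨C.carrier, fun _ w => w ∈ T, fun v => (ev v).1 + 1⟩ : CStruc sigTernary)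
          (fun i => (ev (u i)).1 + 1) () t).trans ?_
        change (Fin 3 → C.carrier) at t
        show (t ∈ T ∨ ∀ i, (ev (t i)).1 + 1 = (ev (u i)).1 + 1) ↔ t ∈ insert u T
        rw [Finset.mem_insert]
        constructor
        · rintro (h | h)
          · exact Or.inr h
          · refine Or.inl (funext fun i => ?_)
            have h2 : ev (t i) = ev (u i) := Fin.ext (by have := h i; omega)
            exact ev.injective h2
        · rintro (h | h)
          · exact Or.inr (fun i => by rw [h])
          · exact Or.inl h
      exact UCW.iso φ hintro
  have hfull := hadd (Finset.univ.filter (fun w => C.rel () w))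
  have hrec := UCW.recolor (f := fun _ => 0) (fun i hi => by show (0:ℕ) < n + 2; omega) hfull
  have φ : CIso
      ((⟨C.carrier, fun _ w => w ∈ Finset.univ.filter (fun w => C.rel () w),
        fun v => (ev v).1 + 1⟩ : CStruc sigTernary).recolor (fun _ => 0)) C := by
    refine ⟨Equiv.refl C.carrier, fun R t => ?_, fun a => hcol a⟩
    cases R
    change (Fin 3 → C.carrier) at t
    show (t ∈ Finset.univ.filter (fun w => C.rel () w)) ↔ C.rel () (fun i => t i)
    rw [Finset.mem_filter]
    simp
  exact UCW.iso φ hrec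


/-- for the structure A' built from a graph A we have
ucw(A') ≥ pw(G_{A'}) + 1. -/
theorem stmt6 (A : CStruc sigGraph) [Fintype A.carrier]
    (hsymm : ∀ a b : A.carrier, A.rel () ![a, b] → A.rel () ![b, a])
    (hirr : ∀ a : A.carrier, ¬ A.rel () ![a, a]) :
    pw (prime A).gaifman + 1 ≤ ucw (prime A) := by
  classical
  haveI hcarrier : Fintype (prime A).carrier := by
    show Fintype (A.carrier ⊕ Unit)
    infer_instance
  obtain ⟨K, hK⟩ := ucw_exists (prime A) (fun a => rfl)
  have hne : {k | UCW sigTernary k (prime A)}.Nonempty := ⟨K, hK⟩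
  have hmem : UCW sigTernary (ucw (prime A)) (prime A) := Nat.sInf_mem hne
  set k₀ := ucw (prime A) with hk₀
  have hconcl : Concl A k₀ (prime A) _root_.id (Sum.inr ()) := by
    refine main_lemma hsymm hmem _root_.id (fun x y h => h) (fun R u hu => hu)
      (Sum.inr ()) rfl ?_
    intro x hx hl
    obtain ⟨u, hu, hu1, hnin⟩ := hl
    exact absurd ⟨u, fun i => rfl, hu⟩ hnin
  obtain ⟨n, bag, hmem2, hedge, hint, hcard, htall, hlast⟩ := hconcl
  have hk1 : 1 ≤ k₀ := by
    have h1 : (bag 0).Nonempty := ⟨Sum.inr (), htall 0⟩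
    have h2 : (bag 0).Finite := Set.toFinite _
    have h3 : 0 < (bag 0).ncard := (Set.ncard_pos h2).mpr h1
    have h4 := hcard 0
    omega
  have hpwle : pwLe (prime A).gaifman (k₀ - 1) := by
    refine ⟨n + 1, ⟨bag, hmem2, hedge, hint⟩, ?_⟩
    intro i
    have := hcard i
    show (bag i).ncard ≤ k₀ - 1 + 1
    omega
  have hpw : pw (prime A).gaifman ≤ k₀ - 1 := Nat.sInf_le hpwle
  omega
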